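/- Let H be a complex Hilbert space and let A, B ∈ B(H) be normal operators with ‖A‖ < 1 and ‖B‖ < 1. Then for every X ∈ B(H) the series Σ_{k=0}^∞ A*ᵏ X Bᵏ converges absolutely in B(H) and ‖Σ_{k=0}^∞ A*ᵏ X Bᵏ‖ ≤ ‖(1 − A*A)^{−1/2} · X · (1 − B*B)^{−1/2}‖, where for a positive invertible operator P, P^{−1/2} denotes the inverse of its positive square root. -/

import Mathlib

set_option synthInstance.maxHeartbeats 400000

open ContinuousLinearMap

section Aux

variable {H : Type*} [NormedAddCommGroup H] [InnerProductSpace ℂ H] [CompleteSpace H]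

local notation "⟪" x ", " y "⟫" => @inner ℂ _ _ x y

private lemma aux_nonneg (T : H →L[ℂ] H) (hT : ‖T‖ < 1) :
    (0 : H →L[ℂ] H) ≤ 1 - adjoint T * T := by
  rw [ContinuousLinearMap.nonneg_iff_isPositive]
  refine ⟨((IsSelfAdjoint.one (H →L[ℂ] H)).sub
    (star_eq_adjoint T ▸ IsSelfAdjoint.star_mul_self T)).isSymmetric, fun x => ?_⟩
  rw [ContinuousLinearMap.reApplyInnerSelf_apply]
  have h1 : (1 - adjoint T * T) x = x - adjoint T (T x) := by
    simp [ContinuousLinearMap.sub_apply, ContinuousLinearMap.mul_apply]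
  rw [h1, inner_sub_left, map_sub]
  have h2 : ⟪adjoint T (T x), x⟫ = ⟪T x, T x⟫ := adjoint_inner_left T x (T x)
  rw [h2, inner_self_eq_norm_sq, inner_self_eq_norm_sq]
  have h3 : ‖T x‖ ≤ ‖T‖ * ‖x‖ := T.le_opNorm x
  have h4 : ‖T x‖ ^ 2 ≤ (‖T‖ * ‖x‖) ^ 2 := pow_le_pow_left₀ (norm_nonneg _) h3 2
  nlinarith [sq_nonneg ‖x‖, norm_nonneg T, mul_nonneg (norm_nonneg T) (sq_nonneg ‖x‖)]

private lemma aux_isUnit (T : H →L[ℂ] H) (hT : ‖T‖ < 1) :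
    IsUnit (CFC.sqrt (1 - adjoint T * T)) := by
  set P := CFC.sqrt (1 - adjoint T * T) with hP
  have hPP : P * P = 1 - adjoint T * T := CFC.sqrt_mul_sqrt_self _ (aux_nonneg T hT)
  have ha : IsUnit (1 - adjoint T * T) := by
    apply isUnit_one_sub_of_norm_lt_one
    calc ‖adjoint T * T‖ ≤ ‖adjoint T‖ * ‖T‖ := norm_mul_le _ _
      _ < 1 := by
          rw [← star_eq_adjoint, norm_star]
          nlinarith [norm_nonneg T]
  obtain ⟨u, hu⟩ := ha
  have h1 : P * (P * ↑u⁻¹) = 1 := by rw [← mul_assoc, hPP, ← hu, Units.mul_inv]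
  have h2 : (↑u⁻¹ * P) * P = 1 := by rw [mul_assoc, hPP, ← hu, Units.inv_mul]
  have h3 : (↑u⁻¹ * P : H →L[ℂ] H) = P * ↑u⁻¹ := by
    conv_lhs => rw [← mul_one (↑u⁻¹ * P : H →L[ℂ] H)]
    rw [← h1, ← mul_assoc, h2, one_mul]
  exact ⟨⟨P, P * ↑u⁻¹, h1, by rw [← h3]; exact h2⟩, rfl⟩

private lemma aux_key (T : H →L[ℂ] H) (hT : ‖T‖ < 1) (w : H) :
    ‖CFC.sqrt (1 - adjoint T * T) w‖ ^ 2 = ‖w‖ ^ 2 - ‖T w‖ ^ 2 := by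
  set P := CFC.sqrt (1 - adjoint T * T) with hP
  have hsa : IsSelfAdjoint P := (CFC.sqrt_nonneg (a := 1 - adjoint T * T)).isSelfAdjoint
  have hadj : adjoint P = P := by rwa [ContinuousLinearMap.isSelfAdjoint_iff'] at hsa
  have hPP : P * P = 1 - adjoint T * T := CFC.sqrt_mul_sqrt_self _ (aux_nonneg T hT)
  have h1 : (⟪P w, P w⟫ : ℂ) = ⟪w, w⟫ - ⟪T w, T w⟫ := by
    have e1 := adjoint_inner_left P (P w) w
    rw [hadj] at e1
    rw [e1, ← ContinuousLinearMap.mul_apply, hPP]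
    have e2 : (1 - adjoint T * T) w = w - adjoint T (T w) := by
      simp [ContinuousLinearMap.sub_apply, ContinuousLinearMap.mul_apply]
    rw [e2, inner_sub_right, adjoint_inner_right]
  have h2 : RCLike.re (⟪P w, P w⟫ : ℂ)
      = RCLike.re (⟪w, w⟫ : ℂ) - RCLike.re (⟪T w, T w⟫ : ℂ) := by rw [h1, map_sub]
  rwa [inner_self_eq_norm_sq, inner_self_eq_norm_sq, inner_self_eq_norm_sq] at h2

private lemma aux_teles (T : H →L[ℂ] H) (hT : ‖T‖ < 1) (n : ℕ) (v : H) :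
    ∑ k ∈ Finset.range n, ‖CFC.sqrt (1 - adjoint T * T) ((T ^ k) v)‖ ^ 2 ≤ ‖v‖ ^ 2 := by
  have h1 : ∀ k, ‖CFC.sqrt (1 - adjoint T * T) ((T ^ k) v)‖ ^ 2
      = ‖(T ^ k) v‖ ^ 2 - ‖(T ^ (k + 1)) v‖ ^ 2 := by
    intro k
    rw [aux_key T hT, pow_succ' T k, ContinuousLinearMap.mul_apply]
  calc ∑ k ∈ Finset.range n, ‖CFC.sqrt (1 - adjoint T * T) ((T ^ k) v)‖ ^ 2
      = ∑ k ∈ Finset.range n, (‖(T ^ k) v‖ ^ 2 - ‖(T ^ (k + 1)) v‖ ^ 2) := by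
        exact Finset.sum_congr rfl fun k _ => h1 k
    _ = ‖(T ^ 0) v‖ ^ 2 - ‖(T ^ n) v‖ ^ 2 := Finset.sum_range_sub' (fun k => ‖(T ^ k) v‖ ^ 2) n
    _ ≤ ‖(T ^ 0) v‖ ^ 2 := by nlinarith [sq_nonneg ‖(T ^ n) v‖]
    _ = ‖v‖ ^ 2 := by simp

end Aux

set_option maxHeartbeats 1000000 in
/-- For normal strict contractions `A`, `B`, the series `Σ A*ᵏ X Bᵏ` converges
absolutely and `‖Σ_{k} A*ᵏ X Bᵏ‖ ≤ ‖(1 − A*A)^{−1/2} X (1 − B*B)^{−1/2}‖`, where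
`P^{−1/2}` denotes the inverse of the positive square root of `P`. -/
theorem norm_tsum_adjoint_pow_mul_pow_le
    {H : Type*} [NormedAddCommGroup H] [InnerProductSpace ℂ H] [CompleteSpace H]
    (A B : H →L[ℂ] H) (hA : IsStarNormal A) (hB : IsStarNormal B)
    (hAn : ‖A‖ < 1) (hBn : ‖B‖ < 1) (X : H →L[ℂ] H) :
    Summable (fun k : ℕ => ‖(adjoint A) ^ k * X * B ^ k‖) ∧
      ‖∑' k : ℕ, (adjoint A) ^ k * X * B ^ k‖ ≤
        ‖Ring.inverse (CFC.sqrt (1 - adjoint A * A)) * X *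
          Ring.inverse (CFC.sqrt (1 - adjoint B * B))‖ := by
  have hpow : ∀ (T : H →L[ℂ] H) (k : ℕ), ‖T ^ k‖ ≤ ‖T‖ ^ k := by
    intro T k
    induction k with
    | zero => simpa [ContinuousLinearMap.one_def] using ContinuousLinearMap.norm_id_le
    | succ n ih =>
        rw [pow_succ, pow_succ]
        exact le_trans (norm_mul_le _ _)
          (mul_le_mul ih le_rfl (norm_nonneg _) (pow_nonneg (norm_nonneg _) _))
  have hadjn : ‖adjoint A‖ = ‖A‖ := by rw [← star_eq_adjoint, norm_star]
  have hsum : Summable (fun k : ℕ => ‖(adjoint A) ^ k * X * B ^ k‖) := by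
    have hAB : ‖A‖ * ‖B‖ < 1 := by nlinarith [norm_nonneg A, norm_nonneg B]
    refine Summable.of_nonneg_of_le (fun k => norm_nonneg _) (fun k => ?_)
      ((summable_geometric_of_lt_one (by positivity) hAB).mul_left ‖X‖)
    calc ‖(adjoint A) ^ k * X * B ^ k‖ ≤ ‖(adjoint A) ^ k‖ * ‖X‖ * ‖B ^ k‖ :=
          le_trans (norm_mul_le _ _) (by gcongr; exact norm_mul_le _ _)
      _ ≤ ‖A‖ ^ k * ‖X‖ * ‖B‖ ^ k := by
          gcongr
          · exact le_trans (hpow _ k) (by rw [hadjn])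
          · exact hpow _ k
      _ = ‖X‖ * (‖A‖ * ‖B‖) ^ k := by rw [mul_pow]; ring
  refine ⟨hsum, ?_⟩
  set P := CFC.sqrt (1 - adjoint A * A) with hPdef
  set Q := CFC.sqrt (1 - adjoint B * B) with hQdef
  set Y := Ring.inverse P * X * Ring.inverse Q with hYdef
  have hPu : IsUnit P := aux_isUnit A hAn
  have hQu : IsUnit Q := aux_isUnit B hBn
  have hPsa : IsSelfAdjoint P := (CFC.sqrt_nonneg (a := 1 - adjoint A * A)).isSelfAdjoint
  have hPadj : adjoint P = P := by rwa [ContinuousLinearMap.isSelfAdjoint_iff'] at hPsa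
  have hX : P * Y * Q = X := by
    calc P * Y * Q = P * (Ring.inverse P * (X * (Ring.inverse Q * Q))) := by
          rw [hYdef]; simp only [mul_assoc]
      _ = X * (Ring.inverse Q * Q) := Ring.mul_inverse_cancel_left _ _ hPu
      _ = X := by rw [Ring.inverse_mul_cancel _ hQu, mul_one]
  set f : ℕ → H →L[ℂ] H := fun k => (adjoint A) ^ k * X * B ^ k with hfdef
  have hSn : ∀ n : ℕ, ‖∑ k ∈ Finset.range n, f k‖ ≤ ‖Y‖ := by
    intro n
    refine ContinuousLinearMap.opNorm_le_bound _ (norm_nonneg Y) fun u => ?_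
    have hinner : ∀ v : H,
        ‖(inner ℂ v ((∑ k ∈ Finset.range n, f k) u) : ℂ)‖ ≤ ‖Y‖ * (‖v‖ * ‖u‖) := by
      intro v
      have hterm : ∀ k, (inner ℂ v (f k u) : ℂ)
          = inner ℂ (P ((A ^ k) v)) (Y (Q ((B ^ k) u))) := by
        intro k
        rw [hfdef]
        simp only [ContinuousLinearMap.mul_apply]
        have h1 : (adjoint A) ^ k = adjoint (A ^ k) := by
          rw [← star_eq_adjoint, ← star_eq_adjoint, ← star_pow]
        rw [h1, adjoint_inner_right]
        conv_lhs => rw [← hX]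
        simp only [ContinuousLinearMap.mul_apply]
        rw [← hPadj, adjoint_inner_right, hPadj]
      have expand : (inner ℂ v ((∑ k ∈ Finset.range n, f k) u) : ℂ)
          = ∑ k ∈ Finset.range n, (inner ℂ (P ((A ^ k) v)) (Y (Q ((B ^ k) u))) : ℂ) := by
        rw [ContinuousLinearMap.sum_apply, inner_sum]
        exact Finset.sum_congr rfl fun k _ => hterm k
      rw [expand]
      set a : ℕ → ℝ := fun k => ‖P ((A ^ k) v)‖ with hadef
      set b : ℕ → ℝ := fun k => ‖Q ((B ^ k) u)‖ with hbdef
      have hab : ∑ k ∈ Finset.range n, a k * b k ≤ ‖v‖ * ‖u‖ := by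
        refine le_of_pow_le_pow_left₀ two_ne_zero (by positivity) ?_
        calc (∑ k ∈ Finset.range n, a k * b k) ^ 2
            ≤ (∑ k ∈ Finset.range n, a k ^ 2) * ∑ k ∈ Finset.range n, b k ^ 2 :=
              Finset.sum_mul_sq_le_sq_mul_sq _ _ _
          _ ≤ ‖v‖ ^ 2 * ‖u‖ ^ 2 := by
              have h1 := aux_teles A hAn n v
              have h2 := aux_teles B hBn n u
              have ha0 : (0:ℝ) ≤ ∑ k ∈ Finset.range n, a k ^ 2 :=
                Finset.sum_nonneg fun k _ => sq_nonneg _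
              have hb0 : (0:ℝ) ≤ ∑ k ∈ Finset.range n, b k ^ 2 :=
                Finset.sum_nonneg fun k _ => sq_nonneg _
              exact mul_le_mul h1 h2 hb0 (by positivity)
          _ = (‖v‖ * ‖u‖) ^ 2 := by ring
      calc ‖∑ k ∈ Finset.range n, (inner ℂ (P ((A ^ k) v)) (Y (Q ((B ^ k) u))) : ℂ)‖
          ≤ ∑ k ∈ Finset.range n, ‖(inner ℂ (P ((A ^ k) v)) (Y (Q ((B ^ k) u))) : ℂ)‖ :=
            norm_sum_le _ _
        _ ≤ ∑ k ∈ Finset.range n, ‖Y‖ * (a k * b k) := by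
            refine Finset.sum_le_sum fun k _ => ?_
            calc ‖(inner ℂ (P ((A ^ k) v)) (Y (Q ((B ^ k) u))) : ℂ)‖
                ≤ ‖P ((A ^ k) v)‖ * ‖Y (Q ((B ^ k) u))‖ := norm_inner_le_norm _ _
              _ ≤ ‖P ((A ^ k) v)‖ * (‖Y‖ * ‖Q ((B ^ k) u)‖) := by
                  gcongr; exact Y.le_opNorm _
              _ = ‖Y‖ * (a k * b k) := by rw [hadef, hbdef]; ring
        _ = ‖Y‖ * ∑ k ∈ Finset.range n, a k * b k := by rw [Finset.mul_sum]
        _ ≤ ‖Y‖ * (‖v‖ * ‖u‖) := by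
            exact mul_le_mul_of_nonneg_left hab (norm_nonneg Y)
    set w := (∑ k ∈ Finset.range n, f k) u with hwdef
    rcases eq_or_lt_of_le (norm_nonneg w) with h0 | h0
    · rw [← h0]; positivity
    · have hww := hinner w
      have e1 : (inner ℂ w w : ℂ) = (‖w‖ : ℂ) ^ 2 := inner_self_eq_norm_sq_to_K w
      rw [e1] at hww
      have e2 : ‖((‖w‖ : ℂ)) ^ 2‖ = ‖w‖ ^ 2 := by
        rw [norm_pow, Complex.norm_real, Real.norm_eq_abs, abs_of_nonneg (norm_nonneg w)]
      rw [e2] at hww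
      nlinarith [norm_nonneg u, norm_nonneg Y]
  have hfs : Summable f := hsum.of_norm
  have htend : Filter.Tendsto (fun n => ‖∑ k ∈ Finset.range n, f k‖)
      Filter.atTop (nhds ‖∑' k, f k‖) := hfs.hasSum.tendsto_sum_nat.norm
  exact le_of_tendsto htend (Filter.Eventually.of_forall hSn)
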